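/- Let t ∈ ℂ, σ > 0, d ≥ 1 and c : ℕ^d × ℕ^d → ℂ. Assume that for every r₂ > 0 there exist r₁ > 0 and C > 0 such that |c(α,β)| ≤ C · r₂^{|β|} (β!)^{1/(2σ)} · r₁^{−|α|} (α!)^{−1/(2σ)} for all α, β ∈ ℕ^d. Then T_{0,t} c satisfies the same property: for every r₂ > 0 there exist r₁ > 0 and C > 0 such that |(T_{0,t} c)(α,β)| ≤ C · r₂^{|β|} (β!)^{1/(2σ)} · r₁^{−|α|} (α!)^{−1/(2σ)} for all α, β. (This expresses that T_{0,t} maps the space ℓ_{𝓑,♭_σ}(ℕ^{2d}) into itself.) -/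

import Mathlib

open Finset

noncomputable section

/-- Size of a multi-index: `|α| = α₁ + ⋯ + α_d`. -/
def msize {d : ℕ} (α : Fin d → ℕ) : ℕ := ∑ i, α i

/-- Factorial of a multi-index: `α! = ∏ᵢ αᵢ!`. -/
def mfact {d : ℕ} (α : Fin d → ℕ) : ℕ := ∏ i, Nat.factorial (α i)

/-- Binomial coefficient of multi-indices: `C(α,γ) = ∏ᵢ choose(αᵢ,γᵢ)`. -/
def mchoose {d : ℕ} (α γ : Fin d → ℕ) : ℕ := ∏ i, Nat.choose (α i) (γ i)

/-- The binomial operator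
`(T_{0,t} c)(α,β) = Σ_{γ ≤ α, γ ≤ β} (C(α,γ) C(β,γ))^{1/2} t^{|γ|} c(α−γ, β−γ)`. -/
def T0 {d : ℕ} (t : ℂ) (c : ((Fin d → ℕ) × (Fin d → ℕ)) → ℂ) :
    ((Fin d → ℕ) × (Fin d → ℕ)) → ℂ := fun p =>
  ∑ γ ∈ Finset.Iic p.1 ∩ Finset.Iic p.2,
    ((Real.sqrt ((mchoose p.1 γ * mchoose p.2 γ : ℕ)) : ℝ) : ℂ) * t ^ (msize γ) *
      c (p.1 - γ, p.2 - γ)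

variable {d : ℕ}

lemma msize_mono {α β : Fin d → ℕ} (h : α ≤ β) : msize α ≤ msize β :=
  Finset.sum_le_sum fun i _ => h i

lemma msize_sub_add {γ α : Fin d → ℕ} (h : γ ≤ α) : msize (α - γ) + msize γ = msize α := by
  unfold msize
  rw [← Finset.sum_add_distrib]
  exact Finset.sum_congr rfl fun i _ => Nat.sub_add_cancel (h i)

lemma choose_le_two_pow' (n k : ℕ) : n.choose k ≤ 2 ^ n := by
  rcases le_or_gt k n with h | h
  · calc n.choose k ≤ ∑ m ∈ Finset.range (n+1), n.choose m :=
          Finset.single_le_sum (fun _ _ => Nat.zero_le _) (Finset.mem_range.2 (Nat.lt_succ_of_le h))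
      _ = 2 ^ n := Nat.sum_range_choose n
  · simp [Nat.choose_eq_zero_of_lt h]

lemma mchoose_le_pow {α γ : Fin d → ℕ} : mchoose α γ ≤ 2 ^ msize α := by
  unfold mchoose msize
  rw [← Finset.prod_pow_eq_pow_sum]
  exact Finset.prod_le_prod' fun i _ => choose_le_two_pow' _ _

lemma mfact_key {γ α : Fin d → ℕ} (h : γ ≤ α) :
    mchoose α γ * (mfact γ * mfact (α - γ)) = mfact α := by
  unfold mchoose mfact
  rw [← Finset.prod_mul_distrib, ← Finset.prod_mul_distrib]
  exact Finset.prod_congr rfl fun i _ => by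
    rw [← mul_assoc]; exact Nat.choose_mul_factorial_mul_factorial (h i)

lemma mfact_pos (α : Fin d → ℕ) : 0 < mfact α :=
  Finset.prod_pos fun i _ => Nat.factorial_pos _

lemma mchoose_pos {γ α : Fin d → ℕ} (h : γ ≤ α) : 0 < mchoose α γ :=
  Finset.prod_pos fun i _ => Nat.choose_pos (h i)

lemma card_inter_le (α β : Fin d → ℕ) :
    (Finset.Iic α ∩ Finset.Iic β).card ≤ 2 ^ msize α := by
  calc (Finset.Iic α ∩ Finset.Iic β).card ≤ (Finset.Iic α).card :=
        Finset.card_le_card Finset.inter_subset_left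
    _ = ∏ i, (Finset.Iic (α i)).card := Pi.card_Iic α
    _ = ∏ i, (α i + 1) := by simp [Nat.card_Iic]
    _ ≤ ∏ i, 2 ^ (α i) := Finset.prod_le_prod' fun i _ => (Nat.lt_two_pow_self (n := α i))
    _ = 2 ^ msize α := Finset.prod_pow_eq_pow_sum _ _ _

lemma sqrt_two_pow (n : ℕ) : Real.sqrt ((2:ℝ) ^ n) = Real.sqrt 2 ^ n := by
  induction n with
  | zero => simp
  | succ k ih => rw [pow_succ, pow_succ, Real.sqrt_mul (by positivity), ih]

/-- `T_{0,t}` maps `ℓ_{𝓑,♭_σ}(ℕ^{2d})` into itself. -/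
theorem stmt_2 (t : ℂ) (σ : ℝ) (hσ : 0 < σ) (d : ℕ) (hd : 1 ≤ d)
    (c : ((Fin d → ℕ) × (Fin d → ℕ)) → ℂ)
    (hc : ∀ r₂ > (0:ℝ), ∃ r₁ > (0:ℝ), ∃ C > (0:ℝ), ∀ α β : Fin d → ℕ,
      ‖c (α, β)‖ ≤
        C * (r₂ ^ (msize β) * (mfact β : ℝ) ^ ((1:ℝ)/(2*σ))) *
          ((r₁ ^ (msize α))⁻¹ * ((mfact α : ℝ) ^ ((1:ℝ)/(2*σ)))⁻¹)) :
    ∀ r₂ > (0:ℝ), ∃ r₁ > (0:ℝ), ∃ C > (0:ℝ), ∀ α β : Fin d → ℕ,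
      ‖T0 t c (α, β)‖ ≤
        C * (r₂ ^ (msize β) * (mfact β : ℝ) ^ ((1:ℝ)/(2*σ))) *
          ((r₁ ^ (msize α))⁻¹ * ((mfact α : ℝ) ^ ((1:ℝ)/(2*σ)))⁻¹) := by
  intro r₂ hr₂
  set e : ℝ := (1:ℝ)/(2*σ) with he
  have he0 : 0 < e := by positivity
  have hs2 : (0:ℝ) < Real.sqrt 2 := by positivity
  set q : ℝ := r₂ / Real.sqrt 2 with hq
  have hq0 : 0 < q := by positivity
  obtain ⟨r₁, hr₁, C, hC, hb⟩ := hc q hq0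
  set M : ℝ := max (‖t‖ * r₁ / q) 1 with hM
  have hM1 : (1:ℝ) ≤ M := le_max_right _ _
  have hM0 : (0:ℝ) < M := lt_of_lt_of_le one_pos hM1
  have h2e : (0:ℝ) < (2:ℝ) ^ e := Real.rpow_pos_of_pos two_pos e
  set K : ℝ := 2 * Real.sqrt 2 * (2:ℝ) ^ e * M with hK
  have hK0 : (0:ℝ) < K := by positivity
  refine ⟨r₁ / K, by positivity, C, hC, ?_⟩
  intro α β
  set a := msize α with ha
  set b := msize β with hbb
  set fα : ℝ := (mfact α : ℝ) ^ e with hfα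
  set fβ : ℝ := (mfact β : ℝ) ^ e with hfβ
  have hfα0 : 0 < fα := Real.rpow_pos_of_pos (by exact_mod_cast mfact_pos α) e
  have hfβ0 : 0 < fβ := Real.rpow_pos_of_pos (by exact_mod_cast mfact_pos β) e
  -- the uniform per-term bound
  set B : ℝ := C * ((Real.sqrt 2 * M * (2:ℝ) ^ e) ^ a * Real.sqrt 2 ^ b) *
      (q ^ b * fβ) * ((r₁ ^ a)⁻¹ * fα⁻¹) with hB
  have hB0 : 0 ≤ B := by positivity
  have key : ∀ γ ∈ Finset.Iic α ∩ Finset.Iic β,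
      ‖((Real.sqrt ((mchoose α γ * mchoose β γ : ℕ)) : ℝ) : ℂ) * t ^ (msize γ) *
        c (α - γ, β - γ)‖ ≤ B := by
    intro γ hγ
    rw [Finset.mem_inter, Finset.mem_Iic, Finset.mem_Iic] at hγ
    obtain ⟨hγα, hγβ⟩ := hγ
    set g := msize γ with hg
    set a' := msize (α - γ) with ha'
    set b' := msize (β - γ) with hb'
    have haa : a' + g = a := msize_sub_add hγα
    have hbb' : b' + g = b := msize_sub_add hγβ
    have hga : g ≤ a := msize_mono hγα
    set fγ : ℝ := (mfact γ : ℝ) ^ e with hfγ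
    set fα' : ℝ := (mfact (α - γ) : ℝ) ^ e with hfα'
    set fβ' : ℝ := (mfact (β - γ) : ℝ) ^ e with hfβ'
    set ch : ℝ := (mchoose α γ : ℝ) ^ e with hch
    have hfγ0 : 0 < fγ := Real.rpow_pos_of_pos (by exact_mod_cast mfact_pos γ) e
    have hfα'0 : 0 < fα' := Real.rpow_pos_of_pos (by exact_mod_cast mfact_pos (α - γ)) e
    have hfβ'0 : 0 < fβ' := Real.rpow_pos_of_pos (by exact_mod_cast mfact_pos (β - γ)) e
    have hch0 : 0 < ch := Real.rpow_pos_of_pos (by exact_mod_cast mchoose_pos hγα) e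
    -- fα = ch * (fγ * fα')
    have hfact : fα = ch * (fγ * fα') := by
      rw [hfα, hch, hfγ, hfα', ← Real.mul_rpow (by positivity) (by positivity),
        ← Real.mul_rpow (by positivity) (by positivity)]
      norm_cast
      rw [mfact_key hγα]
    have hfαinv : fα'⁻¹ = ch * fγ * fα⁻¹ := by
      rw [hfact]
      field_simp
    -- ch ≤ (2^e)^a
    have hchle : ch ≤ ((2:ℝ) ^ e) ^ a := by
      rw [hch, ← Real.rpow_natCast ((2:ℝ) ^ e) a, ← Real.rpow_mul (by norm_num), mul_comm,
        Real.rpow_mul (by norm_num), Real.rpow_natCast]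
      exact Real.rpow_le_rpow (by positivity) (by exact_mod_cast mchoose_le_pow) he0.le
    -- fβ' * fγ ≤ fβ
    have hfble : fβ' * fγ ≤ fβ := by
      rw [hfβ', hfγ, hfβ, ← Real.mul_rpow (by positivity) (by positivity)]
      refine Real.rpow_le_rpow (by positivity) ?_ he0.le
      have : mfact (β - γ) * mfact γ ≤ mfact β := by
        rw [← mfact_key hγβ]
        calc mfact (β - γ) * mfact γ = 1 * (mfact γ * mfact (β - γ)) := by ring
          _ ≤ mchoose β γ * (mfact γ * mfact (β - γ)) :=
            Nat.mul_le_mul_right _ (mchoose_pos hγβ)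
      exact_mod_cast this
    -- sqrt bound
    have hsq : Real.sqrt ((mchoose α γ * mchoose β γ : ℕ) : ℝ) ≤
        Real.sqrt 2 ^ a * Real.sqrt 2 ^ b := by
      rw [← sqrt_two_pow, ← sqrt_two_pow, ← Real.sqrt_mul (by positivity)]
      refine Real.sqrt_le_sqrt ?_
      push_cast
      calc ((mchoose α γ : ℝ)) * (mchoose β γ : ℝ) ≤ (2^a : ℕ) * (2^b : ℕ) := by
            exact_mod_cast Nat.mul_le_mul mchoose_le_pow mchoose_le_pow
        _ = (2:ℝ)^a * (2:ℝ)^b := by push_cast; ring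
    -- t bound
    have htle : (‖t‖ * r₁ / q) ^ g ≤ M ^ a :=
      le_trans (pow_le_pow_left₀ (by positivity) (le_max_left _ _) g)
        (pow_le_pow_right₀ hM1 hga)
    calc ‖((Real.sqrt ((mchoose α γ * mchoose β γ : ℕ)) : ℝ) : ℂ) * t ^ (msize γ) *
          c (α - γ, β - γ)‖
        = Real.sqrt ((mchoose α γ * mchoose β γ : ℕ) : ℝ) * ‖t‖ ^ g *
            ‖c (α - γ, β - γ)‖ := by
          rw [norm_mul, norm_mul, norm_pow, Complex.norm_real, Real.norm_eq_abs,
            abs_of_nonneg (Real.sqrt_nonneg _)]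
      _ ≤ (Real.sqrt 2 ^ a * Real.sqrt 2 ^ b) * ‖t‖ ^ g *
            (C * (q ^ b' * fβ') * ((r₁ ^ a')⁻¹ * fα'⁻¹)) := by
          exact mul_le_mul (mul_le_mul_of_nonneg_right hsq (by positivity))
            (hb (α - γ) (β - γ)) (norm_nonneg _) (by positivity)
      _ = (‖t‖ * r₁ / q) ^ g * ch * (fβ' * fγ) *
            (C * (Real.sqrt 2 ^ a * Real.sqrt 2 ^ b) * (q ^ b' * q ^ g) *
              ((r₁ ^ a' * r₁ ^ g)⁻¹ * fα⁻¹)) := by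
          rw [hfαinv]
          field_simp
          rw [← mul_pow (‖t‖ * r₁ / q), div_mul_cancel₀ _ hq0.ne', mul_pow]
      _ ≤ M ^ a * ((2:ℝ)^e) ^ a * fβ *
            (C * (Real.sqrt 2 ^ a * Real.sqrt 2 ^ b) * (q ^ b' * q ^ g) *
              ((r₁ ^ a' * r₁ ^ g)⁻¹ * fα⁻¹)) := by
          gcongr
      _ = B := by
          rw [hB, ← pow_add q, ← pow_add r₁, hbb', haa]
          ring
  calc ‖T0 t c (α, β)‖
      ≤ ∑ γ ∈ Finset.Iic α ∩ Finset.Iic β,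
          ‖((Real.sqrt ((mchoose α γ * mchoose β γ : ℕ)) : ℝ) : ℂ) * t ^ (msize γ) *
            c (α - γ, β - γ)‖ := by
        exact norm_sum_le _ _
    _ ≤ (Finset.Iic α ∩ Finset.Iic β).card • B := Finset.sum_le_card_nsmul _ _ B key
    _ ≤ (2 ^ a : ℕ) * B := by
        rw [nsmul_eq_mul]
        exact mul_le_mul_of_nonneg_right (by exact_mod_cast card_inter_le α β) hB0
    _ = C * (r₂ ^ b * fβ) * (((r₁ / K) ^ a)⁻¹ * fα⁻¹) := by
        have hqq : Real.sqrt 2 ^ b * q ^ b = r₂ ^ b := by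
          rw [← mul_pow, hq, mul_div_cancel₀ _ hs2.ne']
        have hKK : (((r₁ / K) ^ a)⁻¹ : ℝ) = K ^ a * (r₁ ^ a)⁻¹ := by
          rw [← inv_pow, inv_div, div_pow, div_eq_mul_inv]
        rw [hB, hKK, hK]
        push_cast
        rw [← hqq]
        ring

end
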